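/- Let S and A be finite nonempty sets, f : S × A → ℝ, and for each pair of distinct states s' ≠ s and each a ∈ A let λ(s'|s,a) ≥ 0 be a transition rate, with total rate Λ(s,a) := ∑_{s'≠s} λ(s'|s,a); let γ > 0. Then there exists exactly one function V : S → ℝ satisfying the continuous-time dynamic programming optimality equation γ·V(s) = max_{a∈A} ( f(s,a) + ∑_{s'≠s} λ(s'|s,a)·V(s') − Λ(s,a)·V(s) ) for all s ∈ S. -/

import Mathlib

private lemma sup'_add_const' {α : Type*} (s : Finset α) (hs : s.Nonempty)
    (g : α → ℝ) (c : ℝ) :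
    s.sup' hs (fun a => g a + c) = s.sup' hs g + c := by
  apply le_antisymm
  · exact Finset.sup'_le _ _ fun a ha => add_le_add_left (Finset.le_sup' g ha) c
  · rw [← le_sub_iff_add_le]
    refine Finset.sup'_le _ _ fun a ha => le_sub_iff_add_le.mpr ?_
    exact Finset.le_sup' (fun a => g a + c) ha

private lemma abs_sup'_sub_sup'_le' {α : Type*} (s : Finset α) (hs : s.Nonempty)
    (g h : α → ℝ) (c : ℝ) (hc : ∀ a ∈ s, |g a - h a| ≤ c) :
    |s.sup' hs g - s.sup' hs h| ≤ c := by
  rw [abs_sub_le_iff]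
  constructor
  · rw [sub_le_iff_le_add]
    refine Finset.sup'_le _ _ fun a ha => ?_
    have h1 := (abs_sub_le_iff.mp (hc a ha)).1
    have h2 := Finset.le_sup' h ha
    linarith
  · rw [sub_le_iff_le_add]
    refine Finset.sup'_le _ _ fun a ha => ?_
    have h1 := (abs_sub_le_iff.mp (hc a ha)).2
    have h2 := Finset.le_sup' g ha
    linarith

/-- Existence and uniqueness of the solution of the continuous-time dynamic
programming optimality equation
`γ·V(s) = max_{a∈A} ( f(s,a) + ∑_{s'≠s} λ(s'|s,a)·V(s') − Λ(s,a)·V(s) )`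
on finite nonempty state and action spaces, with nonnegative transition rates
`λ(s'|s,a)` for `s' ≠ s`, total rate `Λ(s,a) = ∑_{s'≠s} λ(s'|s,a)`, and
discount rate `γ > 0`. -/
theorem continuous_time_optimality_equation_existsUnique
    {S A : Type*} [Fintype S] [Nonempty S] [DecidableEq S]
    [Fintype A] [Nonempty A]
    (f : S → A → ℝ) (lam : S → S → A → ℝ)
    (hlam : ∀ s' s a, s' ≠ s → 0 ≤ lam s' s a)
    (γ : ℝ) (hγ : 0 < γ) :
    ∃! V : S → ℝ, ∀ s : S, γ * V s =
      Finset.univ.sup' Finset.univ_nonempty (fun a : A =>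
        f s a + (∑ s' ∈ Finset.univ.erase s, lam s' s a * V s')
          - (∑ s' ∈ Finset.univ.erase s, lam s' s a) * V s) := by
  classical
  set Λ : S → A → ℝ := fun s a => ∑ s' ∈ Finset.univ.erase s, lam s' s a with hΛdef
  have hΛnn : ∀ s a, 0 ≤ Λ s a := fun s a =>
    Finset.sum_nonneg fun s' hs' => hlam s' s a (Finset.ne_of_mem_erase hs')
  have hSA : (Finset.univ : Finset (S × A)).Nonempty := Finset.univ_nonempty
  set C : ℝ := Finset.univ.sup' hSA (fun p : S × A => Λ p.1 p.2) with hCdef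
  have hC : ∀ s a, Λ s a ≤ C := fun s a =>
    Finset.le_sup' (fun p : S × A => Λ p.1 p.2) (Finset.mem_univ (s, a))
  have hC0 : 0 ≤ C :=
    le_trans (hΛnn (Classical.arbitrary S) (Classical.arbitrary A))
      (hC (Classical.arbitrary S) (Classical.arbitrary A))
  have hγC : 0 < γ + C := by linarith
  set T : (S → ℝ) → (S → ℝ) := fun V s => (γ + C)⁻¹ *
    Finset.univ.sup' Finset.univ_nonempty (fun a : A =>
      f s a + (∑ s' ∈ Finset.univ.erase s, lam s' s a * V s') + (C - Λ s a) * V s)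
    with hTdef
  have hkey : ∀ (V : S → ℝ) (s : S), T V s = (γ + C)⁻¹ *
      (Finset.univ.sup' Finset.univ_nonempty (fun a : A =>
        f s a + (∑ s' ∈ Finset.univ.erase s, lam s' s a * V s')
          - Λ s a * V s) + C * V s) := by
    intro V s
    rw [hTdef]
    dsimp only
    congr 1
    rw [← sup'_add_const']
    exact Finset.sup'_congr _ rfl fun a _ => by ring
  -- equivalence between the optimality equation and the fixed-point equation
  have hequiv : ∀ V : S → ℝ,
      (∀ s : S, γ * V s =
        Finset.univ.sup' Finset.univ_nonempty (fun a : A =>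
          f s a + (∑ s' ∈ Finset.univ.erase s, lam s' s a * V s')
            - (∑ s' ∈ Finset.univ.erase s, lam s' s a) * V s))
      ↔ Function.IsFixedPt T V := by
    intro V
    constructor
    · intro h
      funext s
      rw [hkey, ← h s]
      field_simp
    · intro h s
      have h1 : T V s = V s := congrFun h s
      rw [hkey] at h1
      have h2 : (γ + C) * ((γ + C)⁻¹ *
          (Finset.univ.sup' Finset.univ_nonempty (fun a : A =>
            f s a + (∑ s' ∈ Finset.univ.erase s, lam s' s a * V s')
              - Λ s a * V s) + C * V s)) = (γ + C) * V s := by rw [h1]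
      rw [← mul_assoc, mul_inv_cancel₀ hγC.ne', one_mul] at h2
      linarith
  -- contraction
  set K : ℝ := C / (γ + C) with hKdef
  have hK0 : 0 ≤ K := div_nonneg hC0 hγC.le
  have hK1 : K < 1 := by rw [hKdef, div_lt_one hγC]; linarith
  have hlip : LipschitzWith (Real.toNNReal K) T := by
    apply LipschitzWith.of_dist_le_mul
    intro V W
    rw [Real.coe_toNNReal K hK0]
    rw [dist_pi_le_iff (by positivity)]
    intro s
    have hd : ∀ s' : S, |V s' - W s'| ≤ dist V W := by
      intro s'
      have := dist_le_pi_dist V W s'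
      rwa [Real.dist_eq] at this
    have hboundA : ∀ a ∈ (Finset.univ : Finset A),
        |(f s a + (∑ s' ∈ Finset.univ.erase s, lam s' s a * V s') + (C - Λ s a) * V s)
          - (f s a + (∑ s' ∈ Finset.univ.erase s, lam s' s a * W s') + (C - Λ s a) * W s)|
          ≤ C * dist V W := by
      intro a _
      have hrw : (f s a + (∑ s' ∈ Finset.univ.erase s, lam s' s a * V s') + (C - Λ s a) * V s)
          - (f s a + (∑ s' ∈ Finset.univ.erase s, lam s' s a * W s') + (C - Λ s a) * W s)
          = (∑ s' ∈ Finset.univ.erase s, lam s' s a * (V s' - W s'))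
            + (C - Λ s a) * (V s - W s) := by
        rw [Finset.sum_congr rfl (fun s' _ => mul_sub (lam s' s a) (V s') (W s')),
          Finset.sum_sub_distrib]
        ring
      rw [hrw]
      have h1 : |∑ s' ∈ Finset.univ.erase s, lam s' s a * (V s' - W s')|
          ≤ Λ s a * dist V W := by
        calc |∑ s' ∈ Finset.univ.erase s, lam s' s a * (V s' - W s')|
            ≤ ∑ s' ∈ Finset.univ.erase s, |lam s' s a * (V s' - W s')| :=
              Finset.abs_sum_le_sum_abs _ _
          _ ≤ ∑ s' ∈ Finset.univ.erase s, lam s' s a * dist V W := by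
              refine Finset.sum_le_sum fun s' hs' => ?_
              rw [abs_mul, abs_of_nonneg (hlam s' s a (Finset.ne_of_mem_erase hs'))]
              exact mul_le_mul_of_nonneg_left (hd s')
                (hlam s' s a (Finset.ne_of_mem_erase hs'))
          _ = Λ s a * dist V W := by rw [← Finset.sum_mul]
      have h2 : |(C - Λ s a) * (V s - W s)| ≤ (C - Λ s a) * dist V W := by
        rw [abs_mul, abs_of_nonneg (by linarith [hC s a])]
        exact mul_le_mul_of_nonneg_left (hd s) (by linarith [hC s a])
      calc |(∑ s' ∈ Finset.univ.erase s, lam s' s a * (V s' - W s'))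
            + (C - Λ s a) * (V s - W s)|
          ≤ |∑ s' ∈ Finset.univ.erase s, lam s' s a * (V s' - W s')|
            + |(C - Λ s a) * (V s - W s)| := abs_add_le _ _
        _ ≤ Λ s a * dist V W + (C - Λ s a) * dist V W := add_le_add h1 h2
        _ = C * dist V W := by ring
    have hsup := abs_sup'_sub_sup'_le' (Finset.univ : Finset A) Finset.univ_nonempty
      (fun a : A => f s a + (∑ s' ∈ Finset.univ.erase s, lam s' s a * V s')
        + (C - Λ s a) * V s)
      (fun a : A => f s a + (∑ s' ∈ Finset.univ.erase s, lam s' s a * W s')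
        + (C - Λ s a) * W s)
      (C * dist V W) hboundA
    rw [Real.dist_eq, hTdef]
    dsimp only
    rw [← mul_sub, abs_mul, abs_of_nonneg (by positivity : (0:ℝ) ≤ (γ + C)⁻¹)]
    calc (γ + C)⁻¹ * |_ - _| ≤ (γ + C)⁻¹ * (C * dist V W) :=
          mul_le_mul_of_nonneg_left hsup (by positivity)
      _ = K * dist V W := by rw [hKdef]; field_simp
  have hcontr : ContractingWith (Real.toNNReal K) T := by
    refine ⟨?_, hlip⟩
    rw [← NNReal.coe_lt_coe, Real.coe_toNNReal K hK0, NNReal.coe_one]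
    exact hK1
  refine ⟨hcontr.fixedPoint T, ?_, ?_⟩
  · exact (hequiv _).mpr (hcontr.fixedPoint_isFixedPt)
  · intro W hW
    exact hcontr.fixedPoint_unique ((hequiv W).mp hW)
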